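/- In the 0,1 game, every strategy profile in which one agent continues (chooses 2) at every one of her positions and the other agent quits (chooses 1) infinitely often is a subgame perfect equilibrium. -/

import Mathlib

noncomputable section

/-- The two agents. -/
inductive Ag : Type
  | A
  | B
deriving DecidableEq

/-- The set of choices `{1, 2}`. -/
inductive Choice : Type
  | one
  | two
deriving DecidableEq

/-- The polynomial functor whose final coalgebra is the set of finite or
infinite strategy profiles: a node is either an ending position carrying a
utility assignment (no children) or an internal position carrying an agent
and a choice (two children, indexed by `Bool`). -/
def SPF (Agent : Type) : PFunctor.{0} :=
  ⟨(Agent → ℝ) ⊕ (Agent × Choice), fun x => Sum.rec (fun _ => Empty) (fun _ => Bool) x⟩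

/-- Finite or infinite strategy profiles, as the M-type (final coalgebra). -/
def StratProf (Agent : Type) : Type :=
  (SPF Agent).M

/-- The ending position `⟨u⟩`. -/
def leafP {Agent : Type} (u : Agent → ℝ) : StratProf Agent :=
  PFunctor.M.mk ⟨Sum.inl u, fun e => Empty.elim e⟩

/-- The strategy profile `⟨a, c, s₁, s₂⟩`. -/
def nodeP {Agent : Type} (a : Agent) (c : Choice) (s₁ s₂ : StratProf Agent) :
    StratProf Agent :=
  PFunctor.M.mk ⟨Sum.inr (a, c), fun b => bif b then s₂ else s₁⟩

/-- The child selected by choice `c`. -/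
def cchild {Agent : Type} (c : Choice) (s₁ s₂ : StratProf Agent) : StratProf Agent :=
  match c with
  | .one => s₁
  | .two => s₂

/-- `conv s`: following the choices of `s` reaches an ending position after
finitely many steps (inductive definition). -/
inductive Conv {Agent : Type} : StratProf Agent → Prop
  | leaf (u : Agent → ℝ) : Conv (leafP u)
  | node1 (a : Agent) (s₁ s₂ : StratProf Agent) :
      Conv s₁ → Conv (nodeP a Choice.one s₁ s₂)
  | node2 (a : Agent) (s₁ s₂ : StratProf Agent) :
      Conv s₂ → Conv (nodeP a Choice.two s₁ s₂)

/-- The graph of the (partial) utility assignment `ŝ`: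
`UtilR s u` holds iff following the choices of `s` reaches the ending
position `⟨u⟩`. -/
inductive UtilR {Agent : Type} : StratProf Agent → (Agent → ℝ) → Prop
  | leaf (u : Agent → ℝ) : UtilR (leafP u) u
  | node1 (a : Agent) (s₁ s₂ : StratProf Agent) (u : Agent → ℝ) :
      UtilR s₁ u → UtilR (nodeP a Choice.one s₁ s₂) u
  | node2 (a : Agent) (s₁ s₂ : StratProf Agent) (u : Agent → ℝ) :
      UtilR s₂ u → UtilR (nodeP a Choice.two s₁ s₂) u

open Classical in
/-- The utility assignment `ŝ` (an arbitrary default on non-convergent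
profiles). -/
def util {Agent : Type} (s : StratProf Agent) : Agent → ℝ :=
  if h : ∃ u, UtilR s u then h.choose else fun _ => 0

/-- `□P`, the coinductive `always` modality: `P` holds at every position of
the strategy profile (greatest fixed point). -/
def Always {Agent : Type} (P : StratProf Agent → Prop) (s : StratProf Agent) : Prop :=
  ∃ R : StratProf Agent → Prop, R s ∧ ∀ t, R t →
    P t ∧ ∀ a c s₁ s₂, t = nodeP a c s₁ s₂ → R s₁ ∧ R s₂

/-- `PE s`: `s` is always-convergent and the choice at the root of `s` is at
least as good, for the agent who owns the root, as the other choice. -/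
def PE {Agent : Type} (s : StratProf Agent) : Prop :=
  Always Conv s ∧
    (∀ a s₁ s₂, s = nodeP a Choice.one s₁ s₂ → util s₁ a ≥ util s₂ a) ∧
    (∀ a s₁ s₂, s = nodeP a Choice.two s₁ s₂ → util s₂ a ≥ util s₁ a)

/-- Subgame perfect equilibrium: `□PE`. -/
def SPE {Agent : Type} : StratProf Agent → Prop :=
  Always PE

/-- `s =_g s'`: the two strategy profiles have the same underlying game
(coinductive definition). -/
def SameGame {Agent : Type} (s s' : StratProf Agent) : Prop :=
  ∃ R : StratProf Agent → StratProf Agent → Prop, R s s' ∧ ∀ t t', R t t' →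
    (∃ u, t = leafP u ∧ t' = leafP u) ∨
    (∃ a c c' s₁ s₂ s₁' s₂',
      t = nodeP a c s₁ s₂ ∧ t' = nodeP a c' s₁' s₂' ∧ R s₁ s₁' ∧ R s₂ s₂')

/-- `Rat_∞`: rationality for finite or infinite strategy profiles
(coinductive definition). -/
def RatInf {Agent : Type} (s : StratProf Agent) : Prop :=
  ∃ R : StratProf Agent → Prop, R s ∧ ∀ t, R t →
    (∃ u, t = leafP u) ∨
    (∃ a c s₁ s₂ s₁' s₂', t = nodeP a c s₁ s₂ ∧
      SameGame (nodeP a c s₁' s₂') (nodeP a c s₁ s₂) ∧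
      SPE (nodeP a c s₁' s₂') ∧ R (cchild c s₁ s₂))

/-- `diverg`: following the choices never reaches an ending position
(coinductive definition). -/
def Diverg {Agent : Type} (s : StratProf Agent) : Prop :=
  ∃ R : StratProf Agent → Prop, R s ∧ ∀ t, R t →
    ∃ a c s₁ s₂, t = nodeP a c s₁ s₂ ∧ R (cchild c s₁ s₂)

/-- The agent moving at position `n` of an infinite comb game: Alice at even
positions, Bob at odd positions. -/
def agAt (n : ℕ) : Ag :=
  if n % 2 = 0 then Ag.A else Ag.B

/-- Leaf utilities of the 0,1 game at position `n`: the agent who quits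
receives `0` and the other agent receives `1`. -/
def u01 (n : ℕ) : Ag → ℝ :=
  if n % 2 = 0 then fun x =>
    match x with
    | Ag.A => (0 : ℝ)
    | Ag.B => (1 : ℝ)
  else fun x =>
    match x with
    | Ag.A => (1 : ℝ)
    | Ag.B => (0 : ℝ)

/-- One corecursion step for the strategy profile of the 0,1 game determined
by the choice function `f : ℕ → Choice` (the choice made at each position). -/
def comb01Step (f : ℕ → Choice) : (ℕ ⊕ (Ag → ℝ)) → (SPF Ag).Obj (ℕ ⊕ (Ag → ℝ))
  | Sum.inr u => ⟨Sum.inl u, fun e => Empty.elim e⟩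
  | Sum.inl n =>
      ⟨Sum.inr (agAt n, f n),
        fun b => bif b then Sum.inl (n + 1) else Sum.inr (u01 n)⟩

/-- The strategy profile of the 0,1 game, starting at position `n`, in which
the choice at each position `m` is `f m`. -/
def comb01 (f : ℕ → Choice) (n : ℕ) : StratProf Ag :=
  PFunctor.M.corec (comb01Step f) (Sum.inl n)

section Aux

variable {Agent : Type}

lemma leaf_inj {u u' : Agent → ℝ} (h : leafP u = leafP u') : u = u' := by
  have := PFunctor.M.mk_inj h
  have h1 := congrArg Sigma.fst this
  exact Sum.inl.inj h1

lemma leaf_ne_node (u : Agent → ℝ) (a : Agent) (c : Choice) (s₁ s₂ : StratProf Agent) :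
    leafP u ≠ nodeP a c s₁ s₂ := by
  intro h
  have := congrArg Sigma.fst (PFunctor.M.mk_inj h)
  simp at this

lemma node_inj {a a' : Agent} {c c' : Choice} {s₁ s₂ s₁' s₂' : StratProf Agent}
    (h : nodeP a c s₁ s₂ = nodeP a' c' s₁' s₂') :
    a = a' ∧ c = c' ∧ s₁ = s₁' ∧ s₂ = s₂' := by
  have h0 := PFunctor.M.mk_inj h
  have h1 := congrArg Sigma.fst h0
  simp only at h1
  have h1' : (a, c) = (a', c') := Sum.inr.inj h1
  have ha : a = a' := congrArg Prod.fst h1'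
  have hc : c = c' := congrArg Prod.snd h1'
  subst ha; subst hc
  have h2 : HEq (fun b => bif b then s₂ else s₁) (fun b => bif b then s₂' else s₁') := by
    rcases h0 with h0
    exact congr_arg_heq Sigma.snd h0
  have h2' := eq_of_heq h2
  constructor; · rfl
  constructor; · rfl
  exact ⟨congrFun h2' false, congrFun h2' true⟩

lemma utilR_leaf_inv {u w : Agent → ℝ} (h : UtilR (leafP u) w) : w = u := by
  generalize hs : leafP u = s at h
  cases h with
  | leaf u' => exact (leaf_inj hs).symm
  | node1 a s₁ s₂ u' _ => exact absurd hs (leaf_ne_node _ _ _ _ _)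
  | node2 a s₁ s₂ u' _ => exact absurd hs (leaf_ne_node _ _ _ _ _)

lemma utilR_node_inv {a : Agent} {c : Choice} {s₁ s₂ : StratProf Agent} {w : Agent → ℝ}
    (h : UtilR (nodeP a c s₁ s₂) w) : UtilR (cchild c s₁ s₂) w := by
  generalize hs : nodeP a c s₁ s₂ = s at h
  cases h with
  | leaf u' => exact absurd hs.symm (leaf_ne_node _ _ _ _ _)
  | node1 a' t₁ t₂ u' ht =>
      obtain ⟨ha, hc, h1, h2⟩ := node_inj hs
      subst h1; subst hc; exact ht
  | node2 a' t₁ t₂ u' ht =>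
      obtain ⟨ha, hc, h1, h2⟩ := node_inj hs
      subst h2; subst hc; exact ht

lemma utilR_unique {s : StratProf Agent} {u : Agent → ℝ} (h : UtilR s u) :
    ∀ w, UtilR s w → u = w := by
  induction h with
  | leaf u => exact fun w hw => (utilR_leaf_inv hw).symm
  | node1 a s₁ s₂ u _ ih => exact fun w hw => ih w (utilR_node_inv hw)
  | node2 a s₁ s₂ u _ ih => exact fun w hw => ih w (utilR_node_inv hw)

lemma util_eq {s : StratProf Agent} {u : Agent → ℝ} (h : UtilR s u) : util s = u := by
  unfold util
  rw [dif_pos ⟨u, h⟩]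
  exact utilR_unique (Exists.choose_spec ⟨u, h⟩) u h

lemma util_leaf (u : Agent → ℝ) : util (leafP u) = u := util_eq (UtilR.leaf u)

end Aux

lemma comb01_eq (f : ℕ → Choice) (n : ℕ) :
    comb01 f n = nodeP (agAt n) (f n) (leafP (u01 n)) (comb01 f (n + 1)) := by
  rw [comb01, ← PFunctor.M.mk_dest (PFunctor.M.corec (comb01Step f) (Sum.inl n)),
    PFunctor.M.dest_corec]
  show PFunctor.M.mk (PFunctor.map _ _ (comb01Step f (Sum.inl n))) = _
  rw [comb01Step]
  rw [nodeP]
  congr 1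
  refine (PFunctor.map_eq _ _ _ _).trans ?_
  congr 1
  funext b
  cases b with
  | true => rfl
  | false =>
      show PFunctor.M.corec (comb01Step f) (Sum.inr (u01 n)) = leafP (u01 n)
      rw [← PFunctor.M.mk_dest (PFunctor.M.corec (comb01Step f) (Sum.inr (u01 n))),
        PFunctor.M.dest_corec]
      show PFunctor.M.mk (PFunctor.map _ _ (comb01Step f (Sum.inr (u01 n)))) = _
      rw [comb01Step, leafP]
      exact congrArg PFunctor.M.mk
        (congrArg (Sigma.mk (Sum.inl (u01 n))) (funext fun e => e.elim))

lemma u01_owner (n : ℕ) : u01 n (agAt n) = 0 := by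
  by_cases h : n % 2 = 0 <;> simp [u01, agAt, h]

lemma conv_comb (f : ℕ → Choice) :
    ∀ k n, f (n + k) = Choice.one → Conv (comb01 f n) := by
  intro k
  induction k with
  | zero =>
      intro n hn
      rw [comb01_eq]
      rw [Nat.add_zero] at hn
      rw [hn]
      exact Conv.node1 _ _ _ (Conv.leaf _)
  | succ k ih =>
      intro n hn
      rw [comb01_eq]
      cases hf : f n with
      | one => exact Conv.node1 _ _ _ (Conv.leaf _)
      | two =>
          refine Conv.node2 _ _ _ (ih (n + 1) ?_)
          rw [show n + 1 + k = n + (k + 1) by omega]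
          exact hn

lemma utilR_comb (f : ℕ → Choice) (v : Ag → ℝ)
    (Hq : ∀ n, f n = Choice.one → u01 n = v) :
    ∀ k n, f (n + k) = Choice.one → UtilR (comb01 f n) v := by
  intro k
  induction k with
  | zero =>
      intro n hn
      rw [Nat.add_zero] at hn
      rw [comb01_eq, hn, ← Hq n hn]
      exact UtilR.node1 _ _ _ _ (UtilR.leaf _)
  | succ k ih =>
      intro n hn
      rw [comb01_eq]
      cases hf : f n with
      | one =>
          rw [← Hq n hf]
          exact UtilR.node1 _ _ _ _ (UtilR.leaf _)
      | two =>
          refine UtilR.node2 _ _ _ _ (ih (n + 1) ?_)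
          rw [show n + 1 + k = n + (k + 1) by omega]
          exact hn

lemma always_conv_leaf (u : Ag → ℝ) : Always Conv (leafP u) := by
  refine ⟨fun t => t = leafP u, rfl, ?_⟩
  rintro t rfl
  refine ⟨Conv.leaf u, ?_⟩
  intro a c s₁ s₂ h
  exact absurd h (leaf_ne_node _ _ _ _ _)

lemma pe_leaf (u : Ag → ℝ) : PE (leafP u) := by
  refine ⟨always_conv_leaf u, ?_, ?_⟩ <;>
    · intro a s₁ s₂ h
      exact absurd h (leaf_ne_node _ _ _ _ _)

lemma main_spe (f : ℕ → Choice) (v : Ag → ℝ)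
    (Hq : ∀ n, f n = Choice.one → u01 n = v)
    (Hz : ∀ n, f n = Choice.one → v (agAt n) = 0)
    (Hinf : ∀ n, ∃ k, f (n + k) = Choice.one)
    (Hnn : ∀ a, (0 : ℝ) ≤ v a) :
    SPE (comb01 f 0) := by
  have hconv : ∀ n, Conv (comb01 f n) := fun n => by
    obtain ⟨k, hk⟩ := Hinf n; exact conv_comb f k n hk
  have hutil : ∀ n, util (comb01 f n) = v := fun n => by
    obtain ⟨k, hk⟩ := Hinf n; exact util_eq (utilR_comb f v Hq k n hk)
  have hchild : ∀ n a c s₁ s₂, comb01 f n = nodeP a c s₁ s₂ →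
      a = agAt n ∧ c = f n ∧ s₁ = leafP (u01 n) ∧ s₂ = comb01 f (n + 1) := by
    intro n a c s₁ s₂ hn
    rw [comb01_eq] at hn
    obtain ⟨ha, hc, h1, h2⟩ := node_inj hn
    exact ⟨ha.symm, hc.symm, h1.symm, h2.symm⟩
  have hAC : ∀ n, Always Conv (comb01 f n) := by
    intro n
    refine ⟨fun t => (∃ m, t = comb01 f m) ∨ ∃ u, t = leafP u, Or.inl ⟨n, rfl⟩, ?_⟩
    rintro t (⟨m, rfl⟩ | ⟨u, rfl⟩)
    · refine ⟨hconv m, ?_⟩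
      intro a c s₁ s₂ hn
      obtain ⟨_, _, h1, h2⟩ := hchild m a c s₁ s₂ hn
      exact ⟨Or.inr ⟨_, h1⟩, Or.inl ⟨_, h2⟩⟩
    · refine ⟨Conv.leaf u, ?_⟩
      intro a c s₁ s₂ hn
      exact absurd hn (leaf_ne_node _ _ _ _ _)
  have hPE : ∀ n, PE (comb01 f n) := by
    intro n
    refine ⟨hAC n, ?_, ?_⟩
    · intro a s₁ s₂ hn
      obtain ⟨ha, hc, h1, h2⟩ := hchild n a _ s₁ s₂ hn
      subst ha; subst h1; subst h2
      rw [util_leaf, u01_owner, hutil, Hz n hc.symm]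
    · intro a s₁ s₂ hn
      obtain ⟨ha, hc, h1, h2⟩ := hchild n a _ s₁ s₂ hn
      subst ha; subst h1; subst h2
      rw [util_leaf, u01_owner, hutil]
      exact Hnn _
  refine ⟨fun t => (∃ m, t = comb01 f m) ∨ ∃ u, t = leafP u, Or.inl ⟨0, rfl⟩, ?_⟩
  rintro t (⟨m, rfl⟩ | ⟨u, rfl⟩)
  · refine ⟨hPE m, ?_⟩
    intro a c s₁ s₂ hn
    obtain ⟨_, _, h1, h2⟩ := hchild m a c s₁ s₂ hn
    exact ⟨Or.inr ⟨_, h1⟩, Or.inl ⟨_, h2⟩⟩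
  · refine ⟨pe_leaf u, ?_⟩
    intro a c s₁ s₂ hn
    exact absurd hn (leaf_ne_node _ _ _ _ _)


/-- In the 0,1 game, every strategy profile in which one agent continues
(chooses 2) at every one of her positions while the other agent quits
(chooses 1) infinitely often is a subgame perfect equilibrium.  A strategy
profile of the 0,1 game is given by its choice function `f : ℕ → Choice`;
Alice moves at even positions `2k` and Bob at odd positions `2k+1`. -/
theorem zeroOne_spe (f : ℕ → Choice)
    (h : ((∀ k : ℕ, f (2 * k) = Choice.two) ∧
            ∀ m : ℕ, ∃ k : ℕ, m ≤ k ∧ f (2 * k + 1) = Choice.one) ∨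
         ((∀ k : ℕ, f (2 * k + 1) = Choice.two) ∧
            ∀ m : ℕ, ∃ k : ℕ, m ≤ k ∧ f (2 * k) = Choice.one)) :
    SPE (comb01 f 0) := by
  rcases h with ⟨h1, h2⟩ | ⟨h1, h2⟩
  · refine main_spe f (fun x => match x with | Ag.A => 1 | Ag.B => 0) ?_ ?_ ?_ ?_
    · intro n hn
      have hodd : n % 2 = 1 := by
        rcases Nat.mod_two_eq_zero_or_one n with he | ho
        · exfalso
          have hn2 : n = 2 * (n / 2) := by omega
          rw [hn2, h1 (n / 2)] at hn
          exact Choice.noConfusion hn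
        · exact ho
      rw [u01, if_neg (by omega)]
    · intro n hn
      have hodd : n % 2 = 1 := by
        rcases Nat.mod_two_eq_zero_or_one n with he | ho
        · exfalso
          have hn2 : n = 2 * (n / 2) := by omega
          rw [hn2, h1 (n / 2)] at hn
          exact Choice.noConfusion hn
        · exact ho
      rw [agAt, if_neg (by omega)]
    · intro n
      obtain ⟨k, hk, hfk⟩ := h2 n
      refine ⟨2 * k + 1 - n, ?_⟩
      rw [show n + (2 * k + 1 - n) = 2 * k + 1 by omega]
      exact hfk
    · intro a
      cases a <;> norm_num
  · refine main_spe f (fun x => match x with | Ag.A => 0 | Ag.B => 1) ?_ ?_ ?_ ?_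
    · intro n hn
      have heven : n % 2 = 0 := by
        rcases Nat.mod_two_eq_zero_or_one n with he | ho
        · exact he
        · exfalso
          have hn2 : n = 2 * (n / 2) + 1 := by omega
          rw [hn2, h1 (n / 2)] at hn
          exact Choice.noConfusion hn
      rw [u01, if_pos heven]
    · intro n hn
      have heven : n % 2 = 0 := by
        rcases Nat.mod_two_eq_zero_or_one n with he | ho
        · exact he
        · exfalso
          have hn2 : n = 2 * (n / 2) + 1 := by omega
          rw [hn2, h1 (n / 2)] at hn
          exact Choice.noConfusion hn
      rw [agAt, if_pos heven]
    · intro n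
      obtain ⟨k, hk, hfk⟩ := h2 n
      refine ⟨2 * k - n, ?_⟩
      rw [show n + (2 * k - n) = 2 * k by omega]
      exact hfk
    · intro a
      cases a <;> norm_num
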